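/- Let H be an edge-minimal feasible solution to k-DST. Then every vertex of H has in-degree at most k. -/

import Mathlib

open scoped Classical

/-- The list of directed edges traversed by a list of vertices. -/
def pathEdges {V : Type*} (p : List V) : List (V × V) := p.zip p.tail

/-- `p` is a simple directed path in the edge set `E` starting at `s`. -/
def IsRPath {V : Type*} (E : Finset (V × V)) (s : V) (p : List V) : Prop :=
  p.Nodup ∧ p.Chain' (fun u v => (u, v) ∈ E) ∧ p.head? = some s

/-- `p` is a simple directed path in `E` from `s` to `t`. -/
def IsRPathTo {V : Type*} (E : Finset (V × V)) (s t : V) (p : List V) : Prop :=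
  IsRPath E s p ∧ p.getLast? = some t

/-- `E` contains `k` pairwise edge-disjoint directed `s`→`t` paths. -/
def HasKPaths {V : Type*} (E : Finset (V × V)) (s t : V) (k : ℕ) : Prop :=
  ∃ P : Fin k → List V, (∀ i, IsRPathTo E s t (P i)) ∧
    ∀ i j, i ≠ j → ∀ e, e ∈ pathEdges (P i) → e ∉ pathEdges (P j)

/-- In-degree of a vertex `v` in the edge set `E`. -/
def inDeg {V : Type*} [DecidableEq V] (E : Finset (V × V)) (v : V) : ℕ :=
  (E.filter (fun e => e.2 = v)).card

/-- In-degree of a vertex set `S`: number of edges entering `S` from outside. -/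
def inDegS {V : Type*} [DecidableEq V] (E : Finset (V × V)) (S : Finset V) : ℕ :=
  (E.filter (fun e => e.1 ∉ S ∧ e.2 ∈ S)).card

/-- The maximum number of pairwise edge-disjoint `s→v` paths in `E`. -/
noncomputable def maxConn {V : Type*} (E : Finset (V × V)) (s v : V) : ℕ :=
  sSup {m : ℕ | HasKPaths E s v m}

namespace KDST
set_option linter.unusedSectionVars false
variable {V : Type*} [DecidableEq V]

theorem pathEdges_cons₂ (x y : V) (l : List V) :
    pathEdges (x :: y :: l) = (x, y) :: pathEdges (y :: l) := rfl

theorem mem_of_mem_pathEdges {e : V × V} {p : List V} (h : e ∈ pathEdges p) :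
    e.1 ∈ p ∧ e.2 ∈ p := by
  obtain ⟨a, b⟩ := e
  have := List.of_mem_zip h
  exact ⟨this.1, List.mem_of_mem_tail this.2⟩

theorem rel_of_mem_pathEdges {R : V → V → Prop} {e : V × V} {p : List V}
    (hc : p.Chain' R) (h : e ∈ pathEdges p) : R e.1 e.2 := by
  induction p with
  | nil => simp [pathEdges] at h
  | cons x q ih =>
    cases q with
    | nil => simp [pathEdges] at h
    | cons y l =>
      rw [pathEdges_cons₂] at h
      rcases List.mem_cons.1 h with h | h
      · subst h; exact hc.rel_head
      · exact ih hc.tail h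

theorem crossing {R : V → V → Prop} {S : Set V} {p : List V} {a b : V}
    (hc : p.Chain' R) (hh : p.head? = some a) (hl : p.getLast? = some b)
    (ha : a ∉ S) (hb : b ∈ S) :
    ∃ e ∈ pathEdges p, e.1 ∉ S ∧ e.2 ∈ S := by
  induction p generalizing a with
  | nil => simp at hh
  | cons x q ih =>
    simp at hh; subst hh
    cases q with
    | nil => simp at hl; subst hl; exact absurd hb ha
    | cons y l =>
      by_cases hy : y ∈ S
      · exact ⟨(x, y), by simp [pathEdges_cons₂], ha, hy⟩
      · obtain ⟨e, he, h1, h2⟩ := ih hc.tail rfl (by simpa using hl) hy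
        exact ⟨e, by rw [pathEdges_cons₂]; exact List.mem_cons_of_mem _ he, h1, h2⟩

def ReachL (R : V → V → Prop) (r x : V) : Prop :=
  ∃ p : List V, p.Nodup ∧ p.Chain' R ∧ p.head? = some r ∧ p.getLast? = some x

theorem reach_self (R : V → V → Prop) (r : V) : ReachL R r r :=
  ⟨[r], by simp, List.isChain_singleton r, rfl, rfl⟩

theorem reach_step {R : V → V → Prop} {r x y : V} (h : ReachL R r x) (hxy : R x y) :
    ReachL R r y := by
  obtain ⟨p, hnd, hc, hh, hl⟩ := h
  by_cases hy : y ∈ p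
  · obtain ⟨s, t, rfl⟩ := List.append_of_mem hy
    have hpre : (s ++ [y]) <+: (s ++ y :: t) := ⟨t, by simp⟩
    refine ⟨s ++ [y], hnd.sublist hpre.sublist, hc.prefix hpre, ?_, by simp⟩
    rw [← hh]
    cases s with
    | nil => rfl
    | cons z q => simp
  · refine ⟨p ++ [y], by simp [List.nodup_append, hnd, hy]; rintro a ha rfl; exact hy ha, ?_, ?_, by simp⟩
    · refine hc.append (by simp) ?_
      intro a ha b hb
      simp at hb; subst hb
      rw [hl] at ha; simp at ha; subst ha; exact hxy
    · rw [← hh]; cases p with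
      | nil => simp at hh
      | cons z q => simp

def sgn (e : V × V) (w : V) : ℤ := (if e.2 = w then 1 else 0) - (if e.1 = w then 1 else 0)

def ex (F : Finset (V × V)) (w : V) : ℤ := ∑ e ∈ F, sgn e w

theorem ex_sum (F : Finset (V × V)) (S : Finset V) :
    ∑ w ∈ S, ex F w =
      ((F.filter fun e => e.1 ∉ S ∧ e.2 ∈ S).card : ℤ) -
      ((F.filter fun e => e.1 ∈ S ∧ e.2 ∉ S).card : ℤ) := by
  unfold ex sgn
  rw [Finset.sum_comm]
  have : ∀ e : V × V, ∑ w ∈ S, ((if e.2 = w then (1:ℤ) else 0) - (if e.1 = w then 1 else 0))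
      = (if e.1 ∉ S ∧ e.2 ∈ S then (1:ℤ) else 0) - (if e.1 ∈ S ∧ e.2 ∉ S then 1 else 0) := by
    intro e
    rw [Finset.sum_sub_distrib, Finset.sum_ite_eq S e.2, Finset.sum_ite_eq S e.1]
    by_cases h1 : e.1 ∈ S <;> by_cases h2 : e.2 ∈ S <;> simp [h1, h2]
  rw [Finset.sum_congr rfl fun e _ => this e, Finset.sum_sub_distrib]
  rw [Finset.card_filter, Finset.card_filter]
  push_cast
  rfl

theorem ex_pathEdges {p : List V} {r t w : V} (hnd : p.Nodup)
    (hh : p.head? = some r) (hl : p.getLast? = some t) :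
    ex (pathEdges p).toFinset w = (if w = t then 1 else 0) - (if w = r then 1 else 0) := by
  induction p generalizing r with
  | nil => simp at hh
  | cons x q ih =>
    simp at hh; subst hh
    cases q with
    | nil =>
      simp at hl; subst hl
      simp [pathEdges, ex]
    | cons y l =>
      have hnotin : (x, y) ∉ pathEdges (y :: l) := fun h =>
        (List.nodup_cons.1 hnd).1 (mem_of_mem_pathEdges h).1
      have hins : (pathEdges (x :: y :: l)).toFinset
          = insert (x, y) (pathEdges (y :: l)).toFinset := by
        rw [pathEdges_cons₂]; simp
      rw [hins]
      unfold ex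
      rw [Finset.sum_insert (by simpa using hnotin)]
      rw [show (∑ e ∈ (pathEdges (y :: l)).toFinset, sgn e w) = _ from
        ih (List.nodup_cons.1 hnd).2 rfl (by simpa using hl)]
      unfold sgn
      have hxt : x ≠ t := by
        intro h
        have ht : t ∈ y :: l := List.mem_of_mem_getLast? (by simpa using hl)
        exact (List.nodup_cons.1 hnd).1 (h ▸ ht)
      split_ifs <;> simp_all <;> ring

/-- A 0/1 flow of value `k` from `r` to `t`, within capacity set `E`. -/
def IsFlow (E : Finset (V × V)) (r t : V) (F : Finset (V × V)) (k : ℕ) : Prop :=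
  F ⊆ E ∧ (∀ w, w ≠ r → w ≠ t → ex F w = 0) ∧ ex F t = k

theorem flow_zero (E : Finset (V × V)) (r t : V) : IsFlow E r t ∅ 0 :=
  ⟨Finset.empty_subset _, fun _ _ _ => by simp [ex], by simp [ex]⟩

theorem flow_le_card {E : Finset (V × V)} {r t : V} {F : Finset (V × V)} {k : ℕ}
    (h : IsFlow E r t F k) : k ≤ E.card := by
  have h1 : (k : ℤ) ≤ F.card := by
    rw [← h.2.2]
    calc ex F t ≤ ∑ _e ∈ F, (1 : ℤ) := by
          apply Finset.sum_le_sum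
          intro e _
          unfold sgn
          split_ifs <;> omega
      _ = F.card := by simp
  have h2 : (F.card : ℤ) ≤ E.card := by exact_mod_cast Finset.card_le_card h.1
  exact_mod_cast h1.trans h2

theorem sgn_swap (e : V × V) (w : V) : sgn e.swap w = - sgn e w := by
  obtain ⟨a, b⟩ := e; simp only [sgn, Prod.swap_prod_mk]; ring

/-- Augmentation along a residual path. -/
theorem augment {E : Finset (V × V)} {r t : V} {F : Finset (V × V)} {m : ℕ}
    (hF : IsFlow E r t F m) (hrt : r ≠ t)
    (hre : ReachL (fun a b => ((a, b) ∈ E ∧ (a, b) ∉ F) ∨ (b, a) ∈ F) r t) :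
    ∃ F', IsFlow E r t F' (m + 1) := by
  obtain ⟨p, hnd, hc, hh, hl⟩ := hre
  set Pe := (pathEdges p).toFinset with hPe
  set Fw := Pe.filter (fun s => s ∈ E ∧ s ∉ F) with hFw
  set B := (Pe.filter (fun s => ¬(s ∈ E ∧ s ∉ F))).image Prod.swap with hB
  have hBF : B ⊆ F := by
    intro e he
    rw [hB, Finset.mem_image] at he
    obtain ⟨s, hs, rfl⟩ := he
    rw [Finset.mem_filter] at hs
    have := rel_of_mem_pathEdges hc (List.mem_toFinset.1 hs.1)
    rcases this with h | h
    · exact absurd ⟨h.1, h.2⟩ hs.2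
    · exact h
  have hFwE : Fw ⊆ E := fun e he => ((Finset.mem_filter.1 he).2).1
  have hFwF : ∀ e ∈ Fw, e ∉ F := fun e he => ((Finset.mem_filter.1 he).2).2
  have hdisj : Disjoint Fw (F \ B) := by
    rw [Finset.disjoint_left]
    intro e he hm
    exact hFwF e he (Finset.mem_sdiff.1 hm).1
  have key : ∀ w, ex ((F \ B) ∪ Fw) w
        = ex F w + ((if w = t then 1 else 0) - (if w = r then 1 else 0)) := by
      intro w
      have h1 : ex ((F \ B) ∪ Fw) w = ex (F \ B) w + ex Fw w := by
        unfold ex; rw [Finset.sum_union hdisj.symm]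
      have h2 : ex (F \ B) w = ex F w - ex B w := by
        unfold ex; rw [Finset.sum_sdiff_eq_sub hBF]
      have h3 : ex B w = - ∑ s ∈ Pe.filter (fun s => ¬(s ∈ E ∧ s ∉ F)), sgn s w := by
        unfold ex
        rw [hB, Finset.sum_image (by intro a _ b _ h; exact Prod.swap_injective h)]
        rw [← Finset.sum_neg_distrib]
        exact Finset.sum_congr rfl fun s _ => sgn_swap s w
      have h4 : ex Fw w - ex B w = ex Pe w := by
        rw [h3, hFw]
        unfold ex
        rw [sub_neg_eq_add, Finset.sum_filter_add_sum_filter_not]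
      have h5 : ex Pe w = (if w = t then 1 else 0) - (if w = r then 1 else 0) :=
        ex_pathEdges hnd hh hl
      rw [h1, h2]
      rw [← h5, ← h4]
      ring
  refine ⟨(F \ B) ∪ Fw, ?_, ?_, ?_⟩
  · intro e he
    rcases Finset.mem_union.1 he with h | h
    · exact hF.1 (Finset.mem_sdiff.1 h).1
    · exact hFwE h
  · intro w hwr hwt
    rw [key w, hF.2.1 w hwr hwt]
    simp [hwr, hwt]
  · rw [key t, hF.2.2]
    push_cast
    simp [Ne.symm hrt]

theorem hasKPaths_mono {E F : Finset (V × V)} {r t : V} {k : ℕ} (hFE : F ⊆ E)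
    (h : HasKPaths F r t k) : HasKPaths E r t k := by
  obtain ⟨P, h1, h2⟩ := h
  exact ⟨P, fun i => ⟨⟨(h1 i).1.1, ((h1 i).1.2.1).imp (fun _ _ hab => hFE hab),
    (h1 i).1.2.2⟩, (h1 i).2⟩, h2⟩

theorem hasKPaths_trunc {E : Finset (V × V)} {r t : V} {k m : ℕ} (hkm : k ≤ m)
    (h : HasKPaths E r t m) : HasKPaths E r t k := by
  obtain ⟨P, h1, h2⟩ := h
  exact ⟨fun i => P (Fin.castLE hkm i), fun i => h1 _,
    fun i j hij e he => h2 _ _ ((Fin.castLE_injective hkm).ne hij) e he⟩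

theorem hasKPaths_self (E : Finset (V × V)) (r : V) (k : ℕ) : HasKPaths E r r k :=
  ⟨fun _ => [r], fun _ => ⟨⟨by simp, List.isChain_singleton r, rfl⟩, rfl⟩,
    fun i j _ e he => by simp [pathEdges] at he⟩

theorem flow_decomp [Fintype V] {r t : V} (hrt : r ≠ t) :
    ∀ (k : ℕ) (F : Finset (V × V)), IsFlow F r t F k → HasKPaths F r t k := by
  intro k
  induction k with
  | zero => exact fun F _ => ⟨fun i => i.elim0, fun i => i.elim0, fun i => i.elim0⟩
  | succ k ih =>
    intro F hF
    have hreach : ReachL (fun a b => (a, b) ∈ F) r t := by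
      by_contra hnr
      set S := Finset.univ.filter (fun x => ¬ ReachL (fun a b => (a, b) ∈ F) r x) with hS
      have hrS : r ∉ S := by simp [hS]; exact reach_self _ r
      have htS : t ∈ S := by simpa [hS] using hnr
      have hsum : ∑ w ∈ S, ex F w = ((k + 1 : ℕ) : ℤ) := by
        rw [Finset.sum_eq_single_of_mem t htS ?_, hF.2.2]
        intro w hw hwt
        refine hF.2.1 w ?_ hwt
        rintro rfl; exact hrS hw
      have henter : F.filter (fun e => e.1 ∉ S ∧ e.2 ∈ S) = ∅ := by
        rw [Finset.filter_eq_empty_iff]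
        rintro e he ⟨h1, h2⟩
        simp [hS] at h1 h2
        exact h2 (reach_step h1 (by simpa using he))
      rw [ex_sum, henter] at hsum
      simp at hsum
      omega
    obtain ⟨p, hnd, hc, hh, hl⟩ := hreach
    set Pe := (pathEdges p).toFinset with hPedef
    have hPeF : Pe ⊆ F := fun e he => by
      simpa using rel_of_mem_pathEdges hc (List.mem_toFinset.1 he)
    set F' := F \ Pe with hF'def
    have hexe : ∀ w, ex F' w = ex F w - ex Pe w := fun w => by
      unfold ex; rw [hF'def, Finset.sum_sdiff_eq_sub hPeF]
    have hflow' : IsFlow F' r t F' k := by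
      refine ⟨Finset.Subset.refl _, ?_, ?_⟩
      · intro w hwr hwt
        rw [hexe, hF.2.1 w hwr hwt, ex_pathEdges hnd hh hl]
        simp [hwr, hwt]
      · rw [hexe, hF.2.2, ex_pathEdges hnd hh hl]
        simp only [if_pos rfl, if_neg (Ne.symm hrt)]
        push_cast
        ring
    obtain ⟨P', hP1, hP2⟩ := ih F' hflow'
    have hmemF' : ∀ (i : Fin k) e, e ∈ pathEdges (P' i) → e ∈ F' := by
      intro i e he
      simpa using rel_of_mem_pathEdges (hP1 i).1.2.1 he
    refine ⟨fun i => Fin.cases p P' i, ?_, ?_⟩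
    · intro i
      induction i using Fin.cases with
      | zero => exact ⟨⟨hnd, hc, hh⟩, hl⟩
      | succ i =>
        have h := hP1 i
        exact ⟨⟨h.1.1, (h.1.2.1).imp (fun _ _ hab => Finset.sdiff_subset hab), h.1.2.2⟩, h.2⟩
    · intro i j hij e hei hej
      induction i using Fin.cases with
      | zero =>
        induction j using Fin.cases with
        | zero => exact hij rfl
        | succ j =>
          have h1 : e ∈ F' := hmemF' j e hej
          rw [hF'def, Finset.mem_sdiff] at h1
          exact h1.2 (List.mem_toFinset.2 hei)
      | succ i =>
        induction j using Fin.cases with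
        | zero =>
          have h1 : e ∈ F' := hmemF' i e hei
          rw [hF'def, Finset.mem_sdiff] at h1
          exact h1.2 (List.mem_toFinset.2 hej)
        | succ j =>
          exact hP2 i j (fun hh' => hij (by rw [hh'])) e hei hej

theorem menger [Fintype V] {E : Finset (V × V)} {r t : V} {k : ℕ} (hrt : r ≠ t)
    (h : ¬ HasKPaths E r t k) :
    ∃ S : Finset V, r ∉ S ∧ t ∈ S ∧ inDegS E S < k := by
  have h0 : 0 ∈ {m : ℕ | ∃ F, IsFlow E r t F m} := ⟨∅, flow_zero E r t⟩
  have hbdd : BddAbove {m : ℕ | ∃ F, IsFlow E r t F m} :=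
    ⟨E.card, fun m hm => by obtain ⟨F, hF⟩ := hm; exact flow_le_card hF⟩
  set m := sSup {m : ℕ | ∃ F, IsFlow E r t F m} with hm
  obtain ⟨F, hF⟩ : m ∈ {m : ℕ | ∃ F, IsFlow E r t F m} := Nat.sSup_mem ⟨0, h0⟩ hbdd
  set Rel := fun a b => ((a, b) ∈ E ∧ (a, b) ∉ F) ∨ (b, a) ∈ F with hRel
  have hnr : ¬ ReachL Rel r t := by
    intro hre
    obtain ⟨F', hF'⟩ := augment hF hrt hre
    have : m + 1 ≤ m := le_csSup hbdd ⟨F', hF'⟩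
    omega
  set S := Finset.univ.filter (fun x => ¬ ReachL Rel r x) with hS
  have hrS : r ∉ S := by simp [hS]; exact reach_self _ r
  have htS : t ∈ S := by simpa [hS] using hnr
  have henter : E.filter (fun e => e.1 ∉ S ∧ e.2 ∈ S) ⊆ F.filter (fun e => e.1 ∉ S ∧ e.2 ∈ S) := by
    intro e he
    rw [Finset.mem_filter] at he ⊢
    refine ⟨?_, he.2⟩
    by_contra heF
    have h1 : ReachL Rel r e.1 := by simpa [hS] using he.2.1
    have h2 : ReachL Rel r e.2 := reach_step h1 (Or.inl ⟨by simpa using he.1, by simpa using heF⟩)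
    have := he.2.2
    simp [hS] at this
    exact this h2
  have hleave : F.filter (fun e => e.1 ∈ S ∧ e.2 ∉ S) = ∅ := by
    rw [Finset.filter_eq_empty_iff]
    rintro e he ⟨h1, h2⟩
    have hre2 : ReachL Rel r e.2 := by simpa [hS] using h2
    have hre1 : ReachL Rel r e.1 := reach_step hre2 (Or.inr (by simpa using he))
    simp [hS] at h1
    exact h1 hre1
  have hval : ∑ w ∈ S, ex F w = (m : ℤ) := by
    rw [Finset.sum_eq_single_of_mem t htS ?_, hF.2.2]
    intro w hw hwt
    refine hF.2.1 w ?_ hwt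
    rintro rfl; exact hrS hw
  rw [ex_sum, hleave] at hval
  simp at hval
  have hmk : m < k := by
    by_contra hmk
    exact h (hasKPaths_trunc (not_lt.mp hmk)
      (hasKPaths_mono hF.1 (flow_decomp hrt m F ⟨Finset.Subset.refl _, hF.2.1, hF.2.2⟩)))
  refine ⟨S, hrS, htS, ?_⟩
  calc inDegS E S ≤ (F.filter (fun e => e.1 ∉ S ∧ e.2 ∈ S)).card := Finset.card_le_card henter
    _ = m := by exact_mod_cast hval
    _ < k := hmk


theorem cut_lemma {E : Finset (V × V)} {r t : V} {k : ℕ} {S : Finset V}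
    (h : HasKPaths E r t k) (hr : r ∉ S) (ht : t ∈ S) : k ≤ inDegS E S := by
  obtain ⟨P, h1, h2⟩ := h
  have hex : ∀ i : Fin k, ∃ e, e ∈ pathEdges (P i) ∧ e.1 ∉ S ∧ e.2 ∈ S := by
    intro i
    obtain ⟨e, he, hx1, hx2⟩ := crossing (S := {x | x ∈ S}) (h1 i).1.2.1 (h1 i).1.2.2
      (h1 i).2 hr ht
    exact ⟨e, he, hx1, hx2⟩
  choose g hg1 hg2 using hex
  have hmem : ∀ i, g i ∈ E.filter (fun e => e.1 ∉ S ∧ e.2 ∈ S) := by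
    intro i
    rw [Finset.mem_filter]
    refine ⟨?_, hg2 i⟩
    simpa using rel_of_mem_pathEdges (h1 i).1.2.1 (hg1 i)
  have hinj : Function.Injective (fun i => (⟨g i, hmem i⟩ :
      {x // x ∈ E.filter (fun e => e.1 ∉ S ∧ e.2 ∈ S)})) := by
    intro i j hij
    simp only [Subtype.mk.injEq] at hij
    by_contra hne
    exact h2 i j hne (g i) (hg1 i) (hij ▸ hg1 j)
  have := Fintype.card_le_of_injective _ hinj
  simpa [inDegS] using this

theorem inDegS_submod (E : Finset (V × V)) (A B : Finset V) :
    inDegS E (A ∩ B) + inDegS E (A ∪ B) ≤ inDegS E A + inDegS E B := by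
  unfold inDegS
  rw [Finset.card_filter, Finset.card_filter, Finset.card_filter, Finset.card_filter,
    ← Finset.sum_add_distrib, ← Finset.sum_add_distrib]
  apply Finset.sum_le_sum
  intro e _
  by_cases h1 : e.1 ∈ A <;> by_cases h2 : e.1 ∈ B <;>
    by_cases h3 : e.2 ∈ A <;> by_cases h4 : e.2 ∈ B <;>
    simp [Finset.mem_inter, Finset.mem_union, h1, h2, h3, h4]

theorem inDegS_le_erase_add_one (E : Finset (V × V)) (e : V × V) (S : Finset V) :
    inDegS E S ≤ inDegS (E.erase e) S + 1 := by
  unfold inDegS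
  rw [Finset.filter_erase]
  have := Finset.pred_card_le_card_erase (s := E.filter (fun e => e.1 ∉ S ∧ e.2 ∈ S)) (a := e)
  omega

theorem inDegS_erase_eq {E : Finset (V × V)} {e : V × V} {S : Finset V}
    (h : ¬(e.1 ∉ S ∧ e.2 ∈ S)) : inDegS (E.erase e) S = inDegS E S := by
  unfold inDegS
  rw [Finset.filter_erase, Finset.erase_eq_of_notMem]
  rw [Finset.mem_filter]
  tauto

end KDST

/-- In an edge-minimal feasible solution to `k`-DST, every vertex has in-degree at most `k`. -/
theorem kDST_minimal_indeg_le
    {V : Type*} [Fintype V] [DecidableEq V]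
    (E : Finset (V × V)) (r : V) (T : Finset V) (k : ℕ)
    (hfeas : ∀ t ∈ T, HasKPaths E r t k)
    (hmin : ∀ e ∈ E, ∃ t ∈ T, ¬ HasKPaths (E.erase e) r t k)
    (v : V) :
    inDeg E v ≤ k := by
  by_contra hcon
  push_neg at hcon
  set D := E.filter (fun e => e.2 = v) with hD
  have hDv : ∀ e ∈ D, e.2 = v ∧ e ∈ E := by
    intro e he
    rw [hD, Finset.mem_filter] at he
    exact ⟨he.2, he.1⟩
  have percut : ∀ e ∈ D, ∃ S : Finset V,
      r ∉ S ∧ (∃ t ∈ T, t ∈ S) ∧ inDegS E S ≤ k ∧ e.1 ∉ S ∧ e.2 ∈ S := by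
    intro e heD
    obtain ⟨hev, heE⟩ := hDv e heD
    obtain ⟨t, htT, hnk⟩ := hmin e heE
    have hrt : r ≠ t := by rintro rfl; exact hnk (KDST.hasKPaths_self _ _ _)
    obtain ⟨S, hrS, htS, hcut⟩ := KDST.menger hrt hnk
    have hfk : k ≤ inDegS E S := KDST.cut_lemma (hfeas t htT) hrS htS
    have hle : inDegS E S ≤ inDegS (E.erase e) S + 1 :=
      KDST.inDegS_le_erase_add_one E e S
    have hcross : e.1 ∉ S ∧ e.2 ∈ S := by
      by_contra hnc
      rw [← KDST.inDegS_erase_eq hnc] at hfk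
      omega
    exact ⟨S, hrS, ⟨t, htT, htS⟩, by omega, hcross⟩
  have main : ∀ D' : Finset (V × V), D' ⊆ D →
      ∃ S : Finset V, r ∉ S ∧ inDegS E S ≤ k ∧ (∀ e ∈ D', e.1 ∉ S ∧ e.2 ∈ S) ∧
        (D'.Nonempty → v ∈ S) := by
    intro D'
    induction D' using Finset.induction_on with
    | empty =>
      intro _
      exact ⟨∅, by simp, by simp [inDegS], by simp, by simp⟩
    | @insert a D' ha ih =>
      intro hsub
      have haD : a ∈ D := hsub (Finset.mem_insert_self a D')
      obtain ⟨Sa, hra, ⟨t, htT, htSa⟩, hka, hcra⟩ := percut a haD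
      have hav : a.2 = v := (hDv a haD).1
      rcases D'.eq_empty_or_nonempty with rfl | hne
      · refine ⟨Sa, hra, hka, ?_, ?_⟩
        · intro e he
          simp at he; subst he
          exact hcra
        · intro _; exact hav ▸ hcra.2
      · obtain ⟨S, hrS, hkS, hcrS, hvS⟩ :=
          ih (fun e he => hsub (Finset.mem_insert_of_mem he))
        have hvS' : v ∈ S := hvS hne
        have hunion : k ≤ inDegS E (S ∪ Sa) :=
          KDST.cut_lemma (hfeas t htT) (by simp [hrS, hra]) (by simp [htSa])
        have hsep := KDST.inDegS_submod E S Sa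
        refine ⟨S ∩ Sa, by simp [hrS], by omega, ?_, ?_⟩
        · intro e he
          rcases Finset.mem_insert.1 he with rfl | he'
          · exact ⟨by simp [hcra.1], Finset.mem_inter.2 ⟨by rw [hav]; exact hvS', hcra.2⟩⟩
          · have h1 := hcrS e he'
            have h2 : e.2 = v := (hDv e (hsub (Finset.mem_insert_of_mem he'))).1
            exact ⟨by simp [h1.1], Finset.mem_inter.2 ⟨h1.2, by rw [h2, ← hav]; exact hcra.2⟩⟩
        · intro _
          exact Finset.mem_inter.2 ⟨hvS', by rw [← hav]; exact hcra.2⟩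
  obtain ⟨S, hrS, hkS, hcrS, _⟩ := main D (Finset.Subset.refl D)
  have : D ⊆ E.filter (fun e => e.1 ∉ S ∧ e.2 ∈ S) := by
    intro e he
    rw [Finset.mem_filter]
    exact ⟨(hDv e he).2, hcrS e he⟩
  have hfinal : inDeg E v ≤ inDegS E S := Finset.card_le_card this
  omega
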